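/- For every even natural number n, |Δ^{odd}_{3,2}(n) − (Δ^{odd}₃([0, n)) − Δ₃([0, n/2)))| ≤ 1, where Δ^{odd}₃([0, n)) is the excess of evil over odious integers among the odd multiples of 3 in [0, n) and Δ₃([0, n/2)) is the excess of evil over odious integers among the multiples of 3 in [0, n/2). -/

import Mathlib

/-- `s2 m` is the number of 1's in the binary expansion of `m` (binary digit sum). -/
def s2 (m : ℕ) : ℕ := (Nat.digits 2 m).sum

/-- A natural number is *odious* if the number of 1's in its binary expansion is odd. -/
def Odious (m : ℕ) : Prop := Odd (s2 m)

/-- A natural number is *evil* if the number of 1's in its binary expansion is even. -/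
def Evil (m : ℕ) : Prop := Even (s2 m)

instance : DecidablePred Odious := fun m => inferInstanceAs (Decidable (Odd (s2 m)))
instance : DecidablePred Evil := fun m => inferInstanceAs (Decidable (Even (s2 m)))

/-- `muOdious n` = μ⁰(n): the number of odd odious integers in `[0, n)`. -/
def muOdious (n : ℕ) : ℕ := ((Finset.range n).filter (fun m => Odd m ∧ Odious m)).card

/-- `muEvil n` = μᵉ(n): the number of odd evil integers in `[0, n)`. -/
def muEvil (n : ℕ) : ℕ := ((Finset.range n).filter (fun m => Odd m ∧ Evil m)).card

/-- `deltaOdd3 i n` = Δ^{odd}_{3,i}(n): the number of odd odious integers `m ∈ [0, n)` with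
`m ≡ i (mod 3)` minus the number of odd evil integers `m ∈ [0, n)` with `m ≡ i (mod 3)`. -/
def deltaOdd3 (i n : ℕ) : ℤ :=
  (((Finset.range n).filter (fun m => Odd m ∧ m % 3 = i ∧ Odious m)).card : ℤ) -
  (((Finset.range n).filter (fun m => Odd m ∧ m % 3 = i ∧ Evil m)).card : ℤ)

/-- `delta3 N` = Δ₃([0, N)): the number of evil multiples of 3 in `[0, N)` minus the number of
odious multiples of 3 in `[0, N)`. -/
def delta3 (N : ℕ) : ℤ :=
  (((Finset.range N).filter (fun m => 3 ∣ m ∧ Evil m)).card : ℤ) -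
  (((Finset.range N).filter (fun m => 3 ∣ m ∧ Odious m)).card : ℤ)

/-- `deltaOdd3All n` = Δ^{odd}₃([0, n)): the number of odd evil multiples of 3 in `[0, n)`
minus the number of odd odious multiples of 3 in `[0, n)`. -/
def deltaOdd3All (n : ℕ) : ℤ :=
  (((Finset.range n).filter (fun m => Odd m ∧ 3 ∣ m ∧ Evil m)).card : ℤ) -
  (((Finset.range n).filter (fun m => Odd m ∧ 3 ∣ m ∧ Odious m)).card : ℤ)


lemma s2_two_mul_add_one (k : ℕ) : s2 (2*k+1) = s2 k + 1 := by
  unfold s2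
  rw [Nat.digits_def' (by norm_num : 1 < 2) (by omega)]
  simp [Nat.add_mul_div_left, Nat.mul_add_mod, Nat.add_comm]

lemma s2_two_mul (k : ℕ) : s2 (2*k) = s2 k := by
  rcases Nat.eq_zero_or_pos k with h | h
  · simp [h]
  · unfold s2
    rw [Nat.digits_def' (by norm_num : 1 < 2) (by omega)]
    simp [Nat.mul_div_cancel_left, Nat.mul_mod_right]

/-- The weight `+1` on evil numbers and `-1` on odious numbers. -/
def w (m : ℕ) : ℤ := if Even (s2 m) then 1 else -1

lemma w_two_mul (k : ℕ) : w (2*k) = w k := by unfold w; rw [s2_two_mul]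

lemma w_two_mul_add_one (k : ℕ) : w (2*k+1) = -w k := by
  unfold w
  rw [s2_two_mul_add_one]
  by_cases h : Even (s2 k) <;> simp [h, Nat.even_add_one]

lemma sum_range_two_mul (f : ℕ → ℤ) (M : ℕ) :
    ∑ m ∈ Finset.range (2*M), f m = ∑ k ∈ Finset.range M, (f (2*k) + f (2*k+1)) := by
  induction M with
  | zero => simp
  | succ M ih =>
    have h : 2*(M+1) = (2*M+1)+1 := by ring
    rw [h, Finset.sum_range_succ, Finset.sum_range_succ, Finset.sum_range_succ, ih]
    ring

lemma sumW_two_mul (M : ℕ) : ∑ k ∈ Finset.range (2*M), w k = 0 := by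
  rw [sum_range_two_mul]
  apply Finset.sum_eq_zero
  intro k _
  rw [w_two_mul, w_two_mul_add_one]
  ring

lemma abs_w (k : ℕ) : |w k| = 1 := by unfold w; split_ifs <;> simp

lemma abs_sumW (N : ℕ) : |∑ k ∈ Finset.range N, w k| ≤ 1 := by
  rcases Nat.even_or_odd N with ⟨M, hM⟩ | ⟨M, hM⟩
  · rw [hM, show M + M = 2*M by ring, sumW_two_mul]; norm_num
  · rw [hM, Finset.sum_range_succ, sumW_two_mul, zero_add, abs_w]

lemma deltaOdd3_two_eq_sum (n : ℕ) : deltaOdd3 2 n =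
    ∑ m ∈ Finset.range n, (if Odd m ∧ m % 3 = 2 then -w m else 0) := by
  unfold deltaOdd3
  rw [Finset.card_filter, Finset.card_filter]
  push_cast
  rw [← Finset.sum_sub_distrib]
  refine Finset.sum_congr rfl fun m _ => ?_
  by_cases h1 : Odd m <;> by_cases h2 : m % 3 = 2 <;> by_cases h3 : Even (s2 m) <;>
    simp [Odious, Evil, w, ← Nat.not_even_iff_odd, h1, h2, h3]

lemma deltaOdd3All_eq_sum (n : ℕ) : deltaOdd3All n =
    ∑ m ∈ Finset.range n, (if Odd m ∧ 3 ∣ m then w m else 0) := by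
  unfold deltaOdd3All
  rw [Finset.card_filter, Finset.card_filter]
  push_cast
  rw [← Finset.sum_sub_distrib]
  refine Finset.sum_congr rfl fun m _ => ?_
  by_cases h1 : Odd m <;> by_cases h2 : 3 ∣ m <;> by_cases h3 : Even (s2 m) <;>
    simp [Odious, Evil, w, ← Nat.not_even_iff_odd, h1, h2, h3]

lemma delta3_eq_sum (N : ℕ) : delta3 N =
    ∑ m ∈ Finset.range N, (if 3 ∣ m then w m else 0) := by
  unfold delta3
  rw [Finset.card_filter, Finset.card_filter]
  push_cast
  rw [← Finset.sum_sub_distrib]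
  refine Finset.sum_congr rfl fun m _ => ?_
  by_cases h2 : 3 ∣ m <;> by_cases h3 : Even (s2 m) <;>
    simp [Odious, Evil, w, ← Nat.not_even_iff_odd, h2, h3]


/-- For every even natural number `n`,
|Δ^{odd}_{3,2}(n) − (Δ^{odd}₃([0, n)) − Δ₃([0, n/2)))| ≤ 1. -/
theorem abs_deltaOdd3_two_sub_le_one (n : ℕ) (hn : Even n) :
    |deltaOdd3 2 n - (deltaOdd3All n - delta3 (n / 2))| ≤ 1 := by
  obtain ⟨M, hM⟩ := hn
  have hn2 : n = 2 * M := by omega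
  have hdiv : n / 2 = M := by omega
  rw [deltaOdd3_two_eq_sum, deltaOdd3All_eq_sum, delta3_eq_sum, hdiv, hn2]
  have key : (∑ m ∈ Finset.range (2*M), (if Odd m ∧ m % 3 = 2 then -w m else 0)) -
      ((∑ m ∈ Finset.range (2*M), (if Odd m ∧ 3 ∣ m then w m else 0)) -
       ∑ m ∈ Finset.range M, (if 3 ∣ m then w m else 0)) = ∑ k ∈ Finset.range M, w k := by
    rw [sum_range_two_mul, sum_range_two_mul, ← Finset.sum_sub_distrib, ← Finset.sum_sub_distrib]
    refine Finset.sum_congr rfl fun k _ => ?_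
    have ho : Odd (2*k+1) := ⟨k, by ring⟩
    have he : ¬ Odd (2*k) := by simp [Nat.odd_iff]
    have h3 : k % 3 = 0 ∨ k % 3 = 1 ∨ k % 3 = 2 := by omega
    rcases h3 with h | h | h
    · have c1 : ¬((2*k+1) % 3 = 2) := by omega
      have c2 : ¬(3 ∣ (2*k+1)) := by omega
      have c3 : 3 ∣ k := by omega
      simp [ho, he, c1, c2, c3]
    · have c1 : ¬((2*k+1) % 3 = 2) := by omega
      have c2 : 3 ∣ (2*k+1) := by omega
      have c3 : ¬ 3 ∣ k := by omega
      simp [ho, he, c1, c2, c3, w_two_mul_add_one]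
    · have c1 : (2*k+1) % 3 = 2 := by omega
      have c2 : ¬(3 ∣ (2*k+1)) := by omega
      have c3 : ¬ 3 ∣ k := by omega
      simp [ho, he, c1, c2, c3, w_two_mul_add_one]
  rw [key]
  exact abs_sumW M
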